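/- For μ'-almost every ω, the regular conditional distribution of E given the triple (X,Z,U) computed under the worker subpopulation measure μ' coincides with the regular conditional distribution of E given U computed under the full-population measure μ: condDistrib E ⟨X,Z,U⟩ μ' (X ω, Z ω, U ω) = condDistrib E U μ (U ω) as measures on ℝ^{de}. (This is the claim in the proof of Lemma 1 that the distribution of E conditional on X, Z, V and the event H > 0 is identical to the distribution of E conditional on U.) -/

import Mathlib

open MeasureTheory ProbabilityTheory

/-- The distribution of `E` conditional on `(X,Z,U)` in the worker subpopulation
(`H > 0`) is identical to the distribution of `E` conditional on `U` alone in the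
full population. -/
theorem condDistrib_workers_eq_condDistrib_control
    {Ω : Type*} [MeasurableSpace Ω] [StandardBorelSpace Ω] [Nonempty Ω]
    (μ : Measure Ω) [IsProbabilityMeasure μ]
    {dx dz de : ℕ}
    (X : Ω → (Fin dx → ℝ)) (Z : Ω → (Fin dz → ℝ)) (E : Ω → (Fin de → ℝ)) (U : Ω → ℝ)
    (hX : Measurable X) (hZ : Measurable Z) (hE : Measurable E) (hU : Measurable U)
    (hindep : IndepFun (fun ω => (X ω, Z ω)) (fun ω => (E ω, U ω)) μ)
    (hUnif : μ.map U = volume.restrict (Set.Icc (0 : ℝ) 1))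
    (k : (Fin dx → ℝ) → (Fin dz → ℝ) → ℝ → ℝ)
    (hk : Measurable fun p : (Fin dx → ℝ) × (Fin dz → ℝ) × ℝ => k p.1 p.2.1 p.2.2)
    (hkmono : ∀ x z, StrictMono (k x z))
    (H : Ω → ℝ) (hH : H = fun ω => max (k (X ω) (Z ω) (U ω)) 0)
    (hpos : μ {ω | 0 < H ω} ≠ 0) :
    ∀ᵐ ω ∂(μ[|{ω | 0 < H ω}]),
      condDistrib E (fun ω => (X ω, Z ω, U ω)) (μ[|{ω | 0 < H ω}]) (X ω, Z ω, U ω)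
        = condDistrib E U μ (U ω) := by
  have hT : Measurable (fun ω => (X ω, Z ω, U ω)) := hX.prodMk (hZ.prodMk hU)
  have hW : Measurable (fun ω => (X ω, Z ω)) := hX.prodMk hZ
  have hV : Measurable (fun ω => (U ω, E ω)) := hU.prodMk hE
  set κ := condDistrib E U μ with hκdef
  set S₀ : Set ((Fin dx → ℝ) × (Fin dz → ℝ) × ℝ) := {p | 0 < k p.1 p.2.1 p.2.2} with hS₀
  have hS₀m : MeasurableSet S₀ := measurableSet_lt measurable_const hk
  have hSeq : {ω | 0 < H ω} = (fun ω => (X ω, Z ω, U ω)) ⁻¹' S₀ := by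
    ext ω
    simp [hH, hS₀, lt_max_iff]
  have hSm : MeasurableSet {ω | 0 < H ω} := hSeq ▸ hT hS₀m
  haveI : IsProbabilityMeasure (μ[|{ω | 0 < H ω}]) := cond_isProbabilityMeasure hpos
  haveI : IsProbabilityMeasure (μ.map U) := Measure.isProbabilityMeasure_map hU.aemeasurable
  haveI : IsProbabilityMeasure (μ.map (fun ω => (U ω, E ω))) :=
    Measure.isProbabilityMeasure_map hV.aemeasurable
  -- independence consequences
  have hindep' : IndepFun (fun ω => (X ω, Z ω)) (fun ω => (U ω, E ω)) μ :=
    hindep.comp measurable_id measurable_swap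
  have hindepU : IndepFun (fun ω => (X ω, Z ω)) U μ :=
    hindep.comp measurable_id measurable_snd
  have hWV : μ.map (fun ω => ((X ω, Z ω), (U ω, E ω)))
      = (μ.map (fun ω => (X ω, Z ω))).prod (μ.map (fun ω => (U ω, E ω))) :=
    (indepFun_iff_map_prod_eq_prod_map_map hW.aemeasurable hV.aemeasurable).mp hindep'
  have hWU : μ.map (fun ω => ((X ω, Z ω), U ω))
      = (μ.map (fun ω => (X ω, Z ω))).prod (μ.map U) :=
    (indepFun_iff_map_prod_eq_prod_map_map hW.aemeasurable hU.aemeasurable).mp hindepU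
  -- disintegration of (U, E)
  have hdisV : μ.map (fun ω => (U ω, E ω)) = (μ.map U) ⊗ₘ κ := by
    rw [hκdef, condDistrib, ← Measure.fst_map_prodMk (X := U) hE]
    exact (Measure.disintegrate _ _).symm
  -- key identity under the full measure μ
  have key : ∀ (C : Set ((Fin dx → ℝ) × (Fin dz → ℝ) × ℝ)) (t : Set (Fin de → ℝ)),
      MeasurableSet C → MeasurableSet t →
      μ ((fun ω => (X ω, Z ω, U ω)) ⁻¹' C ∩ E ⁻¹' t)
        = ∫⁻ p in C, κ p.2.2 t ∂(μ.map (fun ω => (X ω, Z ω, U ω))) := by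
    intro C t hC ht
    have hρm : Measurable (fun q : ((Fin dx → ℝ) × (Fin dz → ℝ)) × ℝ =>
        (q.1.1, q.1.2, q.2)) :=
      (measurable_fst.fst).prodMk ((measurable_fst.snd).prodMk measurable_snd)
    set D : Set (((Fin dx → ℝ) × (Fin dz → ℝ)) × (ℝ × (Fin de → ℝ))) :=
      ((fun q => (q.1.1, q.1.2, q.2.1)) ⁻¹' C) ∩ ((fun q => q.2.2) ⁻¹' t) with hD
    have hφm : Measurable (fun q : ((Fin dx → ℝ) × (Fin dz → ℝ)) × (ℝ × (Fin de → ℝ)) =>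
        (q.1.1, q.1.2, q.2.1)) :=
      (measurable_fst.fst).prodMk ((measurable_fst.snd).prodMk measurable_snd.fst)
    have hDm : MeasurableSet D := (hφm hC).inter ((measurable_snd.snd) ht)
    have hev : (fun ω => (X ω, Z ω, U ω)) ⁻¹' C ∩ E ⁻¹' t
        = (fun ω => ((X ω, Z ω), (U ω, E ω))) ⁻¹' D := rfl
    rw [hev, ← Measure.map_apply (hW.prodMk hV) hDm, hWV, Measure.prod_apply hDm]
    have hslice : ∀ w : (Fin dx → ℝ) × (Fin dz → ℝ),
        (μ.map (fun ω => (U ω, E ω))) (Prod.mk w ⁻¹' D)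
        = ∫⁻ u, (C.indicator (fun p => κ p.2.2 t)) (w.1, w.2, u) ∂(μ.map U) := by
      intro w
      rw [hdisV, Measure.compProd_apply (measurable_prodMk_left hDm)]
      refine lintegral_congr fun u => ?_
      by_cases hmem : ((w.1, w.2, u) : (Fin dx → ℝ) × (Fin dz → ℝ) × ℝ) ∈ C
      · have hset : Prod.mk u ⁻¹' (Prod.mk w ⁻¹' D) = t := by
          ext e; simp [hD, hmem]
        rw [hset, Set.indicator_of_mem hmem]
      · have hset : Prod.mk u ⁻¹' (Prod.mk w ⁻¹' D) = ∅ := by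
          ext e; simp [hD, hmem]
        rw [hset, Set.indicator_of_notMem hmem]
        simp
    simp_rw [hslice]
    have hindmeas : Measurable (C.indicator
        (fun p : (Fin dx → ℝ) × (Fin dz → ℝ) × ℝ => κ p.2.2 t)) :=
      ((Kernel.measurable_coe κ ht).comp (measurable_snd.comp measurable_snd)).indicator hC
    have hmapT : μ.map (fun ω => (X ω, Z ω, U ω))
        = (μ.map (fun ω => ((X ω, Z ω), U ω))).map
            (fun q : ((Fin dx → ℝ) × (Fin dz → ℝ)) × ℝ => (q.1.1, q.1.2, q.2)) := by
      rw [Measure.map_map hρm (hW.prodMk hU)]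
      rfl
    rw [← lintegral_indicator hC, hmapT, lintegral_map hindmeas hρm, hWU]
    exact (lintegral_prod _ (hindmeas.comp hρm).aemeasurable).symm
  -- the comap kernel
  set η : Kernel ((Fin dx → ℝ) × (Fin dz → ℝ) × ℝ) (Fin de → ℝ) :=
    κ.comap (fun p => p.2.2) (measurable_snd.comp measurable_snd) with hη
  haveI : IsMarkovKernel η := by rw [hη]; infer_instance
  haveI : IsProbabilityMeasure ((μ[|{ω | 0 < H ω}]).map (fun ω => ((X ω, Z ω, U ω), E ω))) :=
    Measure.isProbabilityMeasure_map (hT.prodMk hE).aemeasurable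
  haveI : IsProbabilityMeasure ((μ[|{ω | 0 < H ω}]).map (fun ω => (X ω, Z ω, U ω))) :=
    Measure.isProbabilityMeasure_map hT.aemeasurable
  -- main compProd identity under the conditional measure
  have hstep : (μ[|{ω | 0 < H ω}]).map (fun ω => ((X ω, Z ω, U ω), E ω))
      = ((μ[|{ω | 0 < H ω}]).map (fun ω => (X ω, Z ω, U ω))) ⊗ₘ η := by
    have hmapT' : (μ[|{ω | 0 < H ω}]).map (fun ω => (X ω, Z ω, U ω))
        = (μ {ω | 0 < H ω})⁻¹ • (μ.map (fun ω => (X ω, Z ω, U ω))).restrict S₀ := by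
      rw [ProbabilityTheory.cond, Measure.map_smul, hSeq,
        ← Measure.restrict_map hT hS₀m]
    refine ext_of_generate_finite _ generateFrom_prod.symm isPiSystem_prod ?_ ?_
    · rintro _ ⟨s, hs, t, ht, rfl⟩
      simp only [Set.mem_setOf_eq] at hs ht
      rw [Measure.map_apply (hT.prodMk hE) (hs.prod ht), Set.mk_preimage_prod,
        cond_apply hSm, Measure.compProd_apply_prod hs ht, hmapT']
      have hswap : {ω | 0 < H ω} ∩ ((fun ω => (X ω, Z ω, U ω)) ⁻¹' s ∩ E ⁻¹' t)
          = (fun ω => (X ω, Z ω, U ω)) ⁻¹' (S₀ ∩ s) ∩ E ⁻¹' t := by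
        rw [hSeq, Set.preimage_inter, Set.inter_assoc]
      rw [hswap, key (S₀ ∩ s) t (hS₀m.inter hs) ht]
      rw [Measure.restrict_smul, lintegral_smul_measure,
        Measure.restrict_restrict hs, Set.inter_comm s S₀]
      have hη' : ∀ p : (Fin dx → ℝ) × (Fin dz → ℝ) × ℝ, η p t = κ p.2.2 t := fun p => by
        rw [hη, Kernel.comap_apply]
      simp_rw [hη']
      rfl
    · simp
  have h1 := condDistrib_ae_eq_of_measure_eq_compProd_of_measurable
    (μ := μ[|{ω | 0 < H ω}]) hT hE hstep
  have h2 := ae_of_ae_map hT.aemeasurable h1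
  filter_upwards [h2] with ω hω
  rw [hω, hη, Kernel.comap_apply]
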